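/- Let f₁,…,f_M : (Fin s → ℝ) → ℝ be measurable, square-integrable functions, let A be a tensor of order N and dimension M in each mode, and let h be the function realized with coefficient tensor A. Then for any partition of Fin N into disjoint subsets I and J with I ∪ J = univ, the separation rank of h with respect to (I,J) is at most the rank of the matricization: sep(h; I, J) ≤ rank ⟦A⟧_{I,J}. -/

import Mathlib

open MeasureTheory

noncomputable section

/-- Matricization of a tensor `A` of order `N` and dimension `M` in each mode, with
respect to a partition `(I, J)` of `Fin N` (given `I ∪ J = univ`). -/
def matricize {N M : ℕ} (A : (Fin N → Fin M) → ℝ) (I J : Finset (Fin N))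
    (hU : I ∪ J = Finset.univ) :
    Matrix ({n // n ∈ I} → Fin M) ({n // n ∈ J} → Fin M) ℝ :=
  Matrix.of fun u v => A fun n =>
    if h : n ∈ I then u ⟨n, h⟩
    else v ⟨n, by
      have hn : n ∈ I ∪ J := by rw [hU]; exact Finset.mem_univ n
      exact (Finset.mem_union.mp hn).resolve_left h⟩

/-- The function realized with coefficient tensor `A` and representation functions `f`. -/
def realized {N M s : ℕ} (f : Fin M → (Fin s → ℝ) → ℝ)
    (A : (Fin N → Fin M) → ℝ) : (Fin N → (Fin s → ℝ)) → ℝ :=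
  fun x => ∑ d : Fin N → Fin M, A d * ∏ i, f (d i) (x i)

/-- Separation rank of `h` with respect to the partition `(I, J)`. -/
def sepRank {N s : ℕ} (I J : Finset (Fin N))
    (h : (Fin N → (Fin s → ℝ)) → ℝ) : ℕ :=
  sInf {R : ℕ |
    ∃ (g : Fin R → ({n // n ∈ I} → (Fin s → ℝ)) → ℝ)
      (g' : Fin R → ({n // n ∈ J} → (Fin s → ℝ)) → ℝ),
      (∀ ν, Measurable (g ν)) ∧ (∀ ν, MemLp (g ν) 2 volume) ∧
      (∀ ν, Measurable (g' ν)) ∧ (∀ ν, MemLp (g' ν) 2 volume) ∧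
      ∀ x : Fin N → (Fin s → ℝ),
        h x = ∑ ν, g ν (fun n => x n.1) * g' ν (fun n => x n.1)}

/-- Any matrix over `ℝ` admits a factorization through `Fin B.rank`. -/
theorem exists_rank_factorization {m n : Type*} [Fintype m] [Fintype n] [DecidableEq n]
    (B : Matrix m n ℝ) :
    ∃ (C : Matrix m (Fin B.rank) ℝ) (D : Matrix (Fin B.rank) n ℝ),
      ∀ u v, B u v = ∑ ν, C u ν * D ν v := by
  classical
  set V := LinearMap.range B.mulVecLin with hV
  have hfr : Module.finrank ℝ V = B.rank := rfl
  let b : Module.Basis (Fin B.rank) ℝ V := Module.finBasisOfFinrankEq ℝ V hfr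
  have hcol : ∀ v : n, B.mulVec (Pi.single v 1) ∈ V := fun v =>
    LinearMap.mem_range_self _ _
  refine ⟨Matrix.of fun u ν => (b ν : m → ℝ) u,
          Matrix.of fun ν v => b.repr ⟨B.mulVec (Pi.single v 1), hcol v⟩ ν, ?_⟩
  intro u v
  have h1 : ((⟨B.mulVec (Pi.single v 1), hcol v⟩ : V) : m → ℝ) =
      ∑ ν, b.repr ⟨B.mulVec (Pi.single v 1), hcol v⟩ ν • ((b ν : m → ℝ)) := by
    conv_lhs => rw [← b.sum_repr ⟨B.mulVec (Pi.single v 1), hcol v⟩]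
    push_cast [Submodule.coe_sum]
    simp
  have h2 := congrFun h1 u
  have h3 : B.mulVec (Pi.single v 1) u = B u v := by
    simp [Matrix.mulVec_single]
  simp only [Finset.sum_apply, Pi.smul_apply, smul_eq_mul] at h2
  rw [h3] at h2
  rw [h2]
  exact Finset.sum_congr rfl fun ν _ => mul_comm _ _

/-- A product of measurable square-integrable functions, one in each coordinate,
is square-integrable on the product space. -/
theorem prodL2 {s : ℕ} {ι : Type*} [Fintype ι] (F : ι → (Fin s → ℝ) → ℝ)
    (hm : ∀ i, Measurable (F i)) (hL2 : ∀ i, MemLp (F i) 2 volume) :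
    MemLp (fun y : ι → (Fin s → ℝ) => ∏ i, F i (y i)) 2 volume := by
  have hmeas : Measurable (fun y : ι → (Fin s → ℝ) => ∏ i, F i (y i)) :=
    Finset.measurable_prod _ fun i _ => (hm i).comp (measurable_pi_apply i)
  rw [memLp_two_iff_integrable_sq hmeas.aestronglyMeasurable]
  have hint : ∀ i, Integrable (fun e => F i e ^ 2) volume := fun i =>
    (memLp_two_iff_integrable_sq (hm i).aestronglyMeasurable).mp (hL2 i)
  have h := Integrable.fintype_prod (f := fun i (e : Fin s → ℝ) => F i e ^ 2) hint
  convert h using 2 with y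
  rw [← Finset.prod_pow]
  rfl

/-- The splitting equivalence for index tuples. -/
def splitEquiv {N M : ℕ} (I J : Finset (Fin N)) (hdisj : Disjoint I J)
    (hU : I ∪ J = Finset.univ) :
    (Fin N → Fin M) ≃ (({n // n ∈ I} → Fin M) × ({n // n ∈ J} → Fin M)) where
  toFun d := (fun n => d n.1, fun n => d n.1)
  invFun p n :=
    if h : n ∈ I then p.1 ⟨n, h⟩
    else p.2 ⟨n, by
      have hn : n ∈ I ∪ J := by rw [hU]; exact Finset.mem_univ n
      exact (Finset.mem_union.mp hn).resolve_left h⟩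
  left_inv d := by
    funext n
    by_cases h : n ∈ I <;> simp [h]
  right_inv p := by
    ext n
    · simp [n.2]
    · have hnI : n.1 ∉ I := Finset.disjoint_right.mp hdisj n.2
      simp [hnI]

theorem prod_split {N : ℕ} (I J : Finset (Fin N)) (hdisj : Disjoint I J)
    (hU : I ∪ J = Finset.univ) (G : Fin N → ℝ) :
    ∏ i, G i = (∏ n : {n // n ∈ I}, G n.1) * (∏ n : {n // n ∈ J}, G n.1) := by
  rw [Finset.prod_coe_sort, Finset.prod_coe_sort, ← Finset.prod_union hdisj, hU]

theorem stmt1 (N M s : ℕ) (f : Fin M → (Fin s → ℝ) → ℝ)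
    (hfm : ∀ d, Measurable (f d)) (hfL2 : ∀ d, MemLp (f d) 2 volume)
    (A : (Fin N → Fin M) → ℝ)
    (I J : Finset (Fin N)) (hdisj : Disjoint I J) (hU : I ∪ J = Finset.univ) :
    sepRank I J (realized f A) ≤ (matricize A I J hU).rank := by
  classical
  set B := matricize A I J hU with hB
  obtain ⟨C, D, hCD⟩ := exists_rank_factorization B
  apply Nat.sInf_le
  refine ⟨fun ν y => ∑ u : {n // n ∈ I} → Fin M, C u ν * ∏ n, f (u n) (y n),
          fun ν z => ∑ v : {n // n ∈ J} → Fin M, D ν v * ∏ n, f (v n) (z n),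
          ?_, ?_, ?_, ?_, ?_⟩
  · intro ν
    exact Finset.measurable_sum _ fun u _ =>
      measurable_const.mul (Finset.measurable_prod _ fun n _ =>
        (hfm _).comp (measurable_pi_apply n))
  · intro ν
    refine memLp_finset_sum _ fun u _ => ?_
    exact (prodL2 (fun n => f (u n)) (fun n => hfm _) (fun n => hfL2 _)).const_mul _
  · intro ν
    exact Finset.measurable_sum _ fun v _ =>
      measurable_const.mul (Finset.measurable_prod _ fun n _ =>
        (hfm _).comp (measurable_pi_apply n))
  · intro ν
    refine memLp_finset_sum _ fun v _ => ?_
    exact (prodL2 (fun n => f (v n)) (fun n => hfm _) (fun n => hfL2 _)).const_mul _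
  · intro x
    set e := splitEquiv (M := M) I J hdisj hU with he
    have key : realized f A x =
        ∑ u : {n // n ∈ I} → Fin M, ∑ v : {n // n ∈ J} → Fin M,
          B u v * ((∏ n : {n // n ∈ I}, f (u n) (x n.1)) *
                   (∏ n : {n // n ∈ J}, f (v n) (x n.1))) := by
      rw [realized, ← Equiv.sum_comp e.symm (fun d => A d * ∏ i, f (d i) (x i)),
        Fintype.sum_prod_type]
      refine Finset.sum_congr rfl fun u _ => Finset.sum_congr rfl fun v _ => ?_
      have hA : A (e.symm (u, v)) = B u v := rfl
      rw [hA, prod_split I J hdisj hU]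
      have hu : ∀ n : {n // n ∈ I}, e.symm (u, v) n.1 = u n := fun n => by
        simp [he, splitEquiv, n.2]
      have hv : ∀ n : {n // n ∈ J}, e.symm (u, v) n.1 = v n := fun n => by
        have hnI : n.1 ∉ I := Finset.disjoint_right.mp hdisj n.2
        simp [he, splitEquiv, hnI]
      simp only [hu, hv]
    rw [key]
    have step : ∀ u v,
        B u v * ((∏ n : {n // n ∈ I}, f (u n) (x n.1)) *
                 (∏ n : {n // n ∈ J}, f (v n) (x n.1))) =
        ∑ ν, (C u ν * ∏ n : {n // n ∈ I}, f (u n) (x n.1)) *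
             (D ν v * ∏ n : {n // n ∈ J}, f (v n) (x n.1)) := fun u v => by
      rw [hCD u v, Finset.sum_mul]
      exact Finset.sum_congr rfl fun ν _ => by ring
    simp_rw [step]
    rw [show (∑ ν, (∑ u : {n // n ∈ I} → Fin M, C u ν * ∏ n, f (u n) (x n.1)) *
          (∑ v : {n // n ∈ J} → Fin M, D ν v * ∏ n, f (v n) (x n.1))) =
        ∑ ν, ∑ u : {n // n ∈ I} → Fin M, ∑ v : {n // n ∈ J} → Fin M,
          (C u ν * ∏ n, f (u n) (x n.1)) * (D ν v * ∏ n, f (v n) (x n.1)) from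
      Finset.sum_congr rfl fun ν _ => Finset.sum_mul_sum _ _ _ _]
    calc (∑ u : {n // n ∈ I} → Fin M, ∑ v : {n // n ∈ J} → Fin M, ∑ ν,
            (C u ν * ∏ n, f (u n) (x n.1)) * (D ν v * ∏ n, f (v n) (x n.1)))
        = ∑ u : {n // n ∈ I} → Fin M, ∑ ν, ∑ v : {n // n ∈ J} → Fin M,
            (C u ν * ∏ n, f (u n) (x n.1)) * (D ν v * ∏ n, f (v n) (x n.1)) :=
          Finset.sum_congr rfl fun u _ => Finset.sum_comm
      _ = _ := Finset.sum_comm
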